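/- Assume in addition that f is surjective. Let g, g₀, ℓ : Z → ℝ be continuous functions with g ∘ f = d·g − ℓ, and for each integer n ≥ 1 define g_n := d^{−n}·( g₀ ∘ f^n + Σ_{i=0}^{n−1} d^i·(ℓ ∘ f^{n−1−i}) ). Then sup_{z ∈ Z} |g(z) − g_n(z)| = d^{−n} · sup_{z ∈ Z} |g(z) − g₀(z)| for every n ≥ 1; in particular, the sequence (g_n) converges uniformly on Z to g. -/

import Mathlib

open Filter

theorem key_iter {Z : Type*} (f : Z → Z) (d : ℝ) (g ℓ : Z → ℝ)
    (heq : ∀ z : Z, g (f z) = d * g z - ℓ z) :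
    ∀ (n : ℕ) (z : Z), g (f^[n] z) =
      d ^ n * g z - ∑ i ∈ Finset.range n, d ^ i * ℓ (f^[n - 1 - i] z) := by
  intro n
  induction n with
  | zero => simp
  | succ n ih =>
    intro z
    rw [Function.iterate_succ_apply, ih (f z), heq z, Finset.sum_range_succ]
    have hsum : ∀ i ∈ Finset.range n,
        d ^ i * ℓ (f^[n - 1 - i] (f z)) = d ^ i * ℓ (f^[n + 1 - 1 - i] z) := by
      intro i hi
      rw [Finset.mem_range] at hi
      congr 2
      rw [← Function.iterate_succ_apply]
      congr 1
      omega
    rw [Finset.sum_congr rfl hsum]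
    have : n + 1 - 1 - n = 0 := by omega
    rw [this]
    simp [Function.iterate_zero_apply]
    ring

theorem stmt4 {Z : Type*} [TopologicalSpace Z] [CompactSpace Z]
    (f : Z → Z) (hf : Continuous f) (hsurj : Function.Surjective f)
    (d : ℝ) (hd : 1 < d)
    (g g₀ ℓ : Z → ℝ) (hg : Continuous g) (hg₀ : Continuous g₀) (hℓ : Continuous ℓ)
    (heq : ∀ z : Z, g (f z) = d * g z - ℓ z)
    (gn : ℕ → Z → ℝ)
    (hgn : ∀ (n : ℕ) (z : Z), gn n z = (d ^ n)⁻¹ *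
      (g₀ (f^[n] z) + ∑ i ∈ Finset.range n, d ^ i * ℓ (f^[n - 1 - i] z))) :
    (∀ n : ℕ, 1 ≤ n →
        (⨆ z : Z, |g z - gn n z|) = (d ^ n)⁻¹ * ⨆ z : Z, |g z - g₀ z|) ∧
      TendstoUniformly (fun n z => gn n z) g atTop := by
  have hd0 : (0:ℝ) < d := lt_trans one_pos hd
  have hdn : ∀ n : ℕ, (0:ℝ) < d ^ n := fun n => pow_pos hd0 n
  -- key pointwise formula
  have hkey : ∀ (n : ℕ) (z : Z),
      g z - gn n z = (d ^ n)⁻¹ * (g (f^[n] z) - g₀ (f^[n] z)) := by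
    intro n z
    have h := key_iter f d g ℓ heq n z
    rw [hgn n z]
    have hne : (d:ℝ) ^ n ≠ 0 := (hdn n).ne'
    field_simp
    nlinarith [h]
  have habs : ∀ (n : ℕ) (z : Z),
      |g z - gn n z| = (d ^ n)⁻¹ * |g (f^[n] z) - g₀ (f^[n] z)| := by
    intro n z
    rw [hkey n z, abs_mul, abs_of_pos (inv_pos.mpr (hdn n))]
  -- sup equality
  have hsup : ∀ n : ℕ,
      (⨆ z : Z, |g z - gn n z|) = (d ^ n)⁻¹ * ⨆ z : Z, |g z - g₀ z| := by
    intro n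
    have hsurjn : Function.Surjective (f^[n]) := Function.Surjective.iterate hsurj n
    calc (⨆ z : Z, |g z - gn n z|)
        = ⨆ z : Z, (d ^ n)⁻¹ * |g (f^[n] z) - g₀ (f^[n] z)| := by
          exact iSup_congr (fun z => habs n z)
      _ = (d ^ n)⁻¹ * ⨆ z : Z, |g (f^[n] z) - g₀ (f^[n] z)| :=
          (Real.mul_iSup_of_nonneg (inv_pos.mpr (hdn n)).le _).symm
      _ = (d ^ n)⁻¹ * ⨆ z : Z, |g z - g₀ z| := by
          congr 1
          have : (fun z : Z => |g (f^[n] z) - g₀ (f^[n] z)|) =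
              (fun z : Z => |g z - g₀ z|) ∘ f^[n] := rfl
          rw [iSup, iSup, this, Set.range_comp, hsurjn.range_eq, Set.image_univ]
  refine ⟨fun n _ => hsup n, ?_⟩
  -- uniform convergence
  rw [Metric.tendstoUniformly_iff]
  intro ε hε
  -- bound on |g - g₀|
  have hcont : Continuous fun z : Z => |g z - g₀ z| := (hg.sub hg₀).abs
  have hbdd : BddAbove (Set.range fun z : Z => |g z - g₀ z|) :=
    (isCompact_range hcont).bddAbove
  set C : ℝ := ⨆ z : Z, |g z - g₀ z| with hC
  have hle : ∀ z : Z, |g z - g₀ z| ≤ C := fun z => le_ciSup hbdd z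
  -- choose N with (d^n)⁻¹ * (C+1) < ε, using (d⁻¹)^n → 0
  have hinv : Tendsto (fun n : ℕ => (d ^ n)⁻¹ * (|C| + 1)) atTop (nhds 0) := by
    have h1 : Tendsto (fun n : ℕ => (d⁻¹) ^ n) atTop (nhds 0) :=
      tendsto_pow_atTop_nhds_zero_of_lt_one (by positivity) (by
        rw [inv_lt_one_iff₀]; right; exact hd)
    have h2 := h1.mul_const (|C| + 1)
    simpa [inv_pow] using h2
  have hev : ∀ᶠ n in atTop, (d ^ n)⁻¹ * (|C| + 1) < ε := by
    have := hinv.eventually (eventually_lt_nhds hε)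
    simpa using this
  filter_upwards [hev] with n hn z
  rw [Real.dist_eq, habs n z]
  calc (d ^ n)⁻¹ * |g (f^[n] z) - g₀ (f^[n] z)|
      ≤ (d ^ n)⁻¹ * (|C| + 1) := by
        apply mul_le_mul_of_nonneg_left _ (inv_pos.mpr (hdn n)).le
        calc |g (f^[n] z) - g₀ (f^[n] z)| ≤ C := hle _
          _ ≤ |C| := le_abs_self C
          _ ≤ |C| + 1 := by linarith
    _ < ε := hn
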